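/- Let k be a field of characteristic p > 0 and A an associative unital k-algebra. Then for every n ∈ ℕ the set T_n(A) = {x ∈ A : x^{p^n} ∈ KA} is a Z(A)-submodule of A: it is a k-subspace of A (in particular closed under addition) and for every z ∈ Z(A) and x ∈ T_n(A) one has z·x ∈ T_n(A). -/

import Mathlib

/-- `KA`: the `k`-linear span in `A` of all commutators `a*b - b*a`. -/
def commutatorSpan (k A : Type*) [Field k] [Ring A] [Algebra k A] : Submodule k A :=
  Submodule.span k {x : A | ∃ a b : A, x = a * b - b * a}

section Aux

open Fin.NatCast Fin.CommRing

lemma gen_of_ne_zero {p : ℕ} [NeZero p] (hp : p.Prime) (d : Fin p) (hd : d ≠ 0) (e : Fin p) :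
    ∃ n : ℕ, n • d = e := by
  have hord : addOrderOf d = p := by
    have h1 : addOrderOf d ∣ p := by
      simpa [Fintype.card_fin] using addOrderOf_dvd_card (x := d)
    rcases (Nat.Prime.eq_one_or_self_of_dvd hp _ h1) with h | h
    · exact absurd (AddMonoid.addOrderOf_eq_one_iff.mp h) hd
    · exact h
  have hinj : Function.Injective (fun j : Fin p => j.val • d) := by
    intro a b hab
    simp only at hab
    wlog hle : a.val ≤ b.val generalizing a b
    · exact (this hab.symm (le_of_not_ge hle)).symm
    have hz : (b.val - a.val) • d = 0 := by
      have h2 : (b.val - a.val) • d + a.val • d = a.val • d := by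
        rw [← add_nsmul, Nat.sub_add_cancel hle, ← hab]
      exact add_right_cancel (h2.trans (zero_add _).symm)
    have hdvd : p ∣ (b.val - a.val) := by
      have h3 := addOrderOf_dvd_of_nsmul_eq_zero hz
      rwa [hord] at h3
    have : b.val - a.val = 0 := by
      rcases Nat.eq_zero_or_pos (b.val - a.val) with h | h
      · exact h
      · exact absurd (Nat.le_of_dvd h hdvd) (by omega)
    exact Fin.ext (by omega)
  obtain ⟨j, hj⟩ := Finite.surjective_of_injective hinj e
  exact ⟨j.val, hj⟩

variable {n : ℕ} [NeZero n]

/-- cyclic rotation of a word, as a function on index functions -/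
def rotFn (f : Fin n → Bool) : Fin n → Bool := fun i => f (i + 1)

lemma rotFn_iterate (j : ℕ) (f : Fin n → Bool) (i : Fin n) :
    (rotFn^[j] f) i = f (i + (j : Fin n)) := by
  induction j generalizing f i with
  | zero => simp
  | succ j ih =>
    rw [Function.iterate_succ_apply, ih]
    show f ((i + (j : Fin n)) + 1) = f (i + ((j : ℕ) + 1 : ℕ))
    congr 1
    push_cast
    ring

lemma rotFn_card (f : Fin n → Bool) : rotFn^[n] f = f := by
  funext i
  rw [rotFn_iterate]
  simp [Fin.natCast_self]

lemma rotFn_pow_card (t : ℕ) (f : Fin n → Bool) : (rotFn^[n])^[t] f = f := by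
  induction t with
  | zero => rfl
  | succ t ih => rw [Function.iterate_succ_apply, rotFn_card, ih]

lemma rotFn_mod (j : ℕ) (f : Fin n → Bool) : rotFn^[j] f = rotFn^[j % n] f := by
  conv_lhs => rw [← Nat.mod_add_div j n, Function.iterate_add_apply, Function.iterate_mul]
  rw [rotFn_pow_card]

lemma rotFn_cancel (f : Fin n → Bool) : rotFn^[n - 1] (rotFn f) = f := by
  have h : n - 1 + 1 = n := Nat.succ_pred_eq_of_pos (Nat.pos_of_ne_zero (NeZero.ne n))
  have h2 : rotFn^[n - 1] (rotFn f) = rotFn^[n - 1 + 1] f :=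
    (Function.iterate_succ_apply rotFn (n - 1) f).symm
  rw [h2, h, rotFn_card]

lemma rotFn_const (j : ℕ) (c : Bool) :
    rotFn^[j] (fun _ : Fin n => c) = fun _ => c := by
  induction j with
  | zero => rfl
  | succ j ih => rw [Function.iterate_succ_apply]; exact ih

lemma rot_free {p : ℕ} [NeZero p] (hp : p.Prime) (f : Fin p → Bool)
    (hf : ∀ c : Bool, f ≠ fun _ => c) :
    ∀ a b : Fin p, rotFn^[a.val] f = rotFn^[b.val] f → a = b := by
  intro a b hab
  by_contra hne
  set d : Fin p := a - b with hd
  have hdne : d ≠ 0 := sub_ne_zero.mpr hne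
  have hper : ∀ i : Fin p, f (i + d) = f i := by
    intro i
    have h1 := congrFun hab (i - b)
    rw [rotFn_iterate, rotFn_iterate, Fin.cast_val_eq_self, Fin.cast_val_eq_self] at h1
    have e1 : i - b + a = i + d := by rw [hd]; ring
    have e2 : i - b + b = i := by ring
    rw [e1, e2] at h1
    exact h1
  have hstep : ∀ (m : ℕ) (i : Fin p), f (i + m • d) = f i := by
    intro m
    induction m with
    | zero => simp
    | succ m ih =>
      intro i
      rw [succ_nsmul, ← add_assoc, hper, ih]
  have hconst : ∀ e : Fin p, f e = f 0 := by
    intro e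
    obtain ⟨m, hm⟩ := gen_of_ne_zero hp d hdne e
    have := hstep m 0
    rw [hm, zero_add] at this
    exact this
  exact hf (f 0) (funext hconst)

end Aux

section Alg

variable {k A : Type*} [Field k] [Ring A] [Algebra k A]

lemma mem_commutatorSpan (a b : A) : a * b - b * a ∈ commutatorSpan k A :=
  Submodule.subset_span ⟨a, b, rfl⟩

lemma mkQ_mul_comm (a b : A) :
    (commutatorSpan k A).mkQ (a * b) = (commutatorSpan k A).mkQ (b * a) :=
  (Submodule.Quotient.eq _).mpr (mem_commutatorSpan a b)

/-- rotation invariance of products modulo commutators -/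
lemma mkQ_rot (m : ℕ) (F : Fin (m + 2) → A) :
    (commutatorSpan k A).mkQ (List.ofFn fun i => F (i + 1)).prod =
      (commutatorSpan k A).mkQ (List.ofFn F).prod := by
  have h1 : (List.ofFn fun i : Fin (m+2) => F (i + 1)) =
      (List.ofFn fun i : Fin (m+1) => F i.succ).concat (F 0) := by
    rw [List.ofFn_succ' (fun i : Fin (m+2) => F (i + 1))]
    congr 1
    · congr 1; funext i; rw [Fin.coeSucc_eq_succ]
    · rw [Fin.last_add_one]
  have h2 : List.ofFn F = F 0 :: List.ofFn fun i : Fin (m+1) => F i.succ :=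
    List.ofFn_succ (f := F)
  rw [h1, h2, List.prod_concat, List.prod_cons, mkQ_mul_comm]

lemma expand (x y : A) (m : ℕ) :
    (x + y) ^ m = ∑ f : Fin m → Bool, (List.ofFn fun i => if f i then x else y).prod := by
  induction m with
  | zero => simp
  | succ m ih =>
    rw [pow_succ', ih, Finset.mul_sum]
    rw [← (Fin.consEquiv (fun _ : Fin (m+1) => Bool)).sum_comp]
    rw [Fintype.sum_prod_type]
    rw [Fintype.sum_bool]
    simp only [Fin.consEquiv_apply, List.ofFn_succ, Fin.cons_zero, Fin.cons_succ, List.prod_cons,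
      if_true, if_false]
    simp [add_mul, Finset.sum_add_distrib]

/-- Jacobson's lemma: `(x+y)^p ≡ x^p + y^p` modulo commutators in characteristic `p`. -/
lemma key (p : ℕ) (hp : p.Prime) (hA : (p : A) = 0) (x y : A) :
    (x + y) ^ p - x ^ p - y ^ p ∈ commutatorSpan k A := by
  classical
  haveI : NeZero p := ⟨hp.ne_zero⟩
  obtain ⟨m, hm⟩ : ∃ m, p = m + 2 := by
    have := hp.two_le; exact ⟨p - 2, by omega⟩
  set K := commutatorSpan k A with hK
  set π := K.mkQ with hπ
  set W : (Fin p → Bool) → A := fun f => (List.ofFn fun i => if f i then x else y).prod with hW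
  have rotinv : ∀ f : Fin p → Bool, π (W (rotFn f)) = π (W f) := by
    subst hm
    intro f
    exact mkQ_rot m (fun i => if f i then x else y)
  have rotinv' : ∀ (j : ℕ) (f : Fin p → Bool), π (W (rotFn^[j] f)) = π (W f) := by
    intro j
    induction j with
    | zero => intro f; rfl
    | succ j ih =>
      intro f
      rw [Function.iterate_succ_apply', rotinv, ih]
  have orbit_zero : ∀ f : Fin p → Bool,
      ∑ j : Fin p, π (W (rotFn^[j.val] f)) = 0 := by
    intro f
    have h : ∀ j : Fin p, π (W (rotFn^[j.val] f)) = π (W f) := fun j => rotinv' _ f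
    rw [Finset.sum_congr rfl (fun j _ => h j), Finset.sum_const, Finset.card_univ,
      Fintype.card_fin, ← map_nsmul, nsmul_eq_mul, hA, zero_mul, map_zero]
  -- sum over a rotation-closed set of nonconstant functions vanishes
  have orbsum : ∀ s : Finset (Fin p → Bool),
      (∀ f ∈ s, ∀ c : Bool, f ≠ fun _ => c) → (∀ f ∈ s, rotFn f ∈ s) →
      ∑ f ∈ s, π (W f) = 0 := by
    intro s
    induction s using Finset.strongInduction with
    | _ s ih =>
      intro hnc hcl
      rcases s.eq_empty_or_nonempty with rfl | ⟨f₀, hf₀⟩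
      · simp
      set O : Finset (Fin p → Bool) :=
        Finset.image (fun j : Fin p => rotFn^[j.val] f₀) Finset.univ with hO
      have hiter : ∀ t : ℕ, rotFn^[t] f₀ ∈ s := by
        intro t
        induction t with
        | zero => simpa using hf₀
        | succ t iht => rw [Function.iterate_succ_apply']; exact hcl _ iht
      have hOs : O ⊆ s := by
        intro g hg
        rw [hO, Finset.mem_image] at hg
        obtain ⟨j, -, rfl⟩ := hg
        exact hiter _
      have hf₀O : f₀ ∈ O := by
        rw [hO, Finset.mem_image]
        exact ⟨0, Finset.mem_univ _, rfl⟩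
      have hOsum : ∑ g ∈ O, π (W g) = 0 := by
        rw [hO, Finset.sum_image (fun a _ b _ h => rot_free hp f₀ (hnc f₀ hf₀) a b h)]
        exact orbit_zero f₀
      have hclosed : ∀ f ∈ s \ O, rotFn f ∈ s \ O := by
        intro f hf
        rw [Finset.mem_sdiff] at hf ⊢
        refine ⟨hcl _ hf.1, ?_⟩
        intro hrot
        apply hf.2
        rw [hO, Finset.mem_image] at hrot
        obtain ⟨j, -, hj⟩ := hrot
        have hfe : f = rotFn^[(p - 1) + j.val] f₀ := by
          rw [Function.iterate_add_apply, hj, rotFn_cancel]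
        rw [hO, Finset.mem_image]
        refine ⟨⟨((p - 1) + j.val) % p, Nat.mod_lt _ (Nat.pos_of_ne_zero (NeZero.ne p))⟩,
          Finset.mem_univ _, ?_⟩
        rw [← rotFn_mod, ← hfe]
      have hssub : s \ O ⊂ s := by
        apply Finset.sdiff_ssubset hOs ⟨f₀, hf₀O⟩
      have hrest : ∑ f ∈ s \ O, π (W f) = 0 :=
        ih _ hssub (fun f hf => hnc f (Finset.mem_sdiff.mp hf).1) hclosed
      rw [← Finset.sum_sdiff hOs, hrest, hOsum, add_zero]
  -- assemble
  have hct : (fun _ : Fin p => true) ≠ (fun _ : Fin p => false) := by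
    intro h
    simpa using congrFun h ⟨0, Nat.pos_of_ne_zero (NeZero.ne p)⟩
  have hmemcf : (fun _ : Fin p => false) ∈ Finset.univ.erase (fun _ : Fin p => true) :=
    Finset.mem_erase.mpr ⟨fun h => hct h.symm, Finset.mem_univ _⟩
  have hFnc : ∀ f ∈ (Finset.univ.erase (fun _ : Fin p => true)).erase (fun _ : Fin p => false),
      ∀ c : Bool, f ≠ fun _ => c := by
    intro f hf c
    rw [Finset.mem_erase, Finset.mem_erase] at hf
    cases c
    · exact hf.1
    · exact hf.2.1
  have hFcl : ∀ f ∈ (Finset.univ.erase (fun _ : Fin p => true)).erase (fun _ : Fin p => false),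
      rotFn f ∈ (Finset.univ.erase (fun _ : Fin p => true)).erase (fun _ : Fin p => false) := by
    intro f hf
    rw [Finset.mem_erase, Finset.mem_erase]
    have key0 : ∀ c : Bool, rotFn f ≠ fun _ => c := by
      intro c h
      apply hFnc f hf c
      rw [← rotFn_cancel f, h, rotFn_const]
    exact ⟨key0 false, key0 true, Finset.mem_univ _⟩
  have main : π ((x + y) ^ p) = π (x ^ p) + π (y ^ p) := by
    rw [expand x y p, map_sum,
      ← Finset.add_sum_erase _ _ (Finset.mem_univ (fun _ : Fin p => true)),
      ← Finset.add_sum_erase _ _ hmemcf, orbsum _ hFnc hFcl, add_zero]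
    have h1 : W (fun _ : Fin p => true) = x ^ p := by
      simp [hW, List.ofFn_const]
    have h2 : W (fun _ : Fin p => false) = y ^ p := by
      simp [hW, List.ofFn_const]
    show π (W fun _ => true) + π (W fun _ => false) = _
    rw [h1, h2]
  have h3 : (x + y) ^ p - (x ^ p + y ^ p) ∈ K := by
    rw [← Submodule.Quotient.eq]
    show π _ = π _
    rw [main, map_add]
  simpa [sub_sub] using h3

lemma neg_pow_char' (p : ℕ) (hp : p.Prime) (hA : (p : A) = 0) (v : A) :
    (-v) ^ p = -(v ^ p) := by
  rcases hp.eq_two_or_odd' with rfl | hodd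
  · have h2 : v ^ 2 + v ^ 2 = 0 := by
      rw [← two_mul, show (2 : A) = ((2 : ℕ) : A) by norm_cast, hA, zero_mul]
    rw [neg_sq]
    exact (neg_eq_of_add_eq_zero_left h2).symm
  · exact hodd.neg_pow v

lemma pow_mem_commutatorSpan (p : ℕ) (hp : p.Prime) (hA : (p : A) = 0) {c : A}
    (hc : c ∈ commutatorSpan k A) : c ^ p ∈ commutatorSpan k A := by
  induction hc using Submodule.span_induction with
  | mem w hw =>
    obtain ⟨a, b, rfl⟩ := hw
    set u := a * b
    set v := b * a
    have ht := key (k := k) p hp hA u (-v)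
    have habp : ∀ n : ℕ, (a * b) ^ (n + 1) = a * ((b * a) ^ n * b) := by
      intro n
      induction n with
      | zero => simp
      | succ n ih => rw [pow_succ', ih, pow_succ']; simp [mul_assoc]
    have hmain : u ^ p - v ^ p ∈ commutatorSpan k A := by
      obtain ⟨m', hm'⟩ : ∃ m', p = m' + 1 := ⟨p - 1, by have := hp.two_le; omega⟩
      have h1 : u ^ p = (a * (b * a) ^ m') * b := by
        rw [hm', habp, mul_assoc]
      have h2 : v ^ p = b * (a * (b * a) ^ m') := by
        rw [hm']
        show (b * a) ^ (m' + 1) = b * (a * (b * a) ^ m')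
        rw [pow_succ', mul_assoc]
      rw [h1, h2]
      exact mem_commutatorSpan _ _
    have hneg : (-v) ^ p = -(v ^ p) := neg_pow_char' p hp hA v
    have : (a * b - b * a) ^ p =
        ((u + -v) ^ p - u ^ p - (-v) ^ p) + (u ^ p - v ^ p) := by
      rw [hneg]; rw [show a * b - b * a = u + -v by rw [sub_eq_add_neg]]; abel
    rw [this]
    exact Submodule.add_mem _ ht hmain
  | zero => rw [zero_pow hp.ne_zero]; exact Submodule.zero_mem _
  | add c d hc hd ihc ihd =>
    have := key (k := k) p hp hA c d
    have h : (c + d) ^ p = ((c + d) ^ p - c ^ p - d ^ p) + c ^ p + d ^ p := by abel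
    rw [h]
    exact Submodule.add_mem _ (Submodule.add_mem _ this ihc) ihd
  | smul r c hc ihc =>
    rw [smul_pow]
    exact Submodule.smul_mem _ _ ihc

lemma key_iter (p : ℕ) (hp : p.Prime) (hA : (p : A) = 0) (n : ℕ) (x y : A) :
    (x + y) ^ p ^ n - x ^ p ^ n - y ^ p ^ n ∈ commutatorSpan k A := by
  induction n with
  | zero => simp
  | succ n ih =>
    have hc := ih
    set c := (x + y) ^ p ^ n - x ^ p ^ n - y ^ p ^ n with hcdef
    set u := x ^ p ^ n
    set v := y ^ p ^ n
    have hxy : (x + y) ^ p ^ n = u + v + c := by rw [hcdef]; abel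
    have e1 : (x + y) ^ p ^ (n + 1) = ((u + v) + c) ^ p := by
      rw [pow_succ, pow_mul, hxy]
    have e2 : x ^ p ^ (n + 1) = u ^ p := by rw [pow_succ, pow_mul]
    have e3 : y ^ p ^ (n + 1) = v ^ p := by rw [pow_succ, pow_mul]
    rw [e1, e2, e3]
    have t1 := key (k := k) p hp hA (u + v) c
    have t2 := key (k := k) p hp hA u v
    have t3 := pow_mem_commutatorSpan p hp hA hc
    have : ((u + v) + c) ^ p - u ^ p - v ^ p =
        (((u + v) + c) ^ p - (u + v) ^ p - c ^ p) + ((u + v) ^ p - u ^ p - v ^ p) + c ^ p := by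
      abel
    rw [this]
    exact Submodule.add_mem _ (Submodule.add_mem _ t1 t2) t3

lemma central_mul_mem (w : A) (hw : ∀ t : A, w * t = t * w) {c : A}
    (hc : c ∈ commutatorSpan k A) : w * c ∈ commutatorSpan k A := by
  induction hc using Submodule.span_induction with
  | mem g hg =>
    obtain ⟨a, b, rfl⟩ := hg
    have : w * (a * b - b * a) = (w * a) * b - b * (w * a) := by
      calc w * (a * b - b * a) = w * a * b - w * b * a := by noncomm_ring
        _ = (w * a) * b - b * (w * a) := by rw [hw b]; noncomm_ring
    rw [this]
    exact mem_commutatorSpan _ _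
  | zero => rw [mul_zero]; exact Submodule.zero_mem _
  | add c d _ _ ihc ihd => rw [mul_add]; exact Submodule.add_mem _ ihc ihd
  | smul r c _ ihc => rw [mul_smul_comm]; exact Submodule.smul_mem _ _ ihc

end Alg

/-- For a field `k` of characteristic `p > 0`, a `k`-algebra `A` and `n ∈ ℕ`, the set
`T_n(A) = {x | x^{p^n} ∈ KA}` is a `Z(A)`-submodule of `A`: it is a `k`-subspace of `A`
(in particular closed under addition) and it is stable under multiplication by central
elements. -/
theorem Tn_is_center_submodule
    (k A : Type*) [Field k] [Ring A] [Algebra k A]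
    (p : ℕ) [Fact p.Prime] [CharP k p] (n : ℕ) :
    ∃ S : Submodule k A,
      (S : Set A) = {x : A | x ^ p ^ n ∈ commutatorSpan k A} ∧
      ∀ z ∈ Subalgebra.center k A, ∀ x ∈ S, z * x ∈ S := by
  have hp : p.Prime := Fact.out
  have hA : (p : A) = 0 := by
    rw [← map_natCast (algebraMap k A) p, CharP.cast_eq_zero k p, map_zero]
  refine ⟨{ carrier := {x : A | x ^ p ^ n ∈ commutatorSpan k A}
            add_mem' := ?_
            zero_mem' := ?_
            smul_mem' := ?_ }, rfl, ?_⟩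
  case refine_2 =>
    show (0 : A) ^ p ^ n ∈ commutatorSpan k A
    rw [zero_pow (pow_ne_zero n hp.ne_zero)]
    exact Submodule.zero_mem _
  · intro x y hx hy
    show (x + y) ^ p ^ n ∈ commutatorSpan k A
    have h := key_iter (k := k) p hp hA n x y
    have : (x + y) ^ p ^ n =
        ((x + y) ^ p ^ n - x ^ p ^ n - y ^ p ^ n) + x ^ p ^ n + y ^ p ^ n := by abel
    rw [this]
    exact Submodule.add_mem _ (Submodule.add_mem _ h hx) hy
  · intro r x hx
    show (r • x) ^ p ^ n ∈ commutatorSpan k A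
    rw [smul_pow]
    exact Submodule.smul_mem _ _ hx
  · intro z hz x hx
    show (z * x) ^ p ^ n ∈ commutatorSpan k A
    have hz' := Subalgebra.mem_center_iff.mp hz
    have hcomm : Commute z x := (hz' x).symm
    rw [hcomm.mul_pow]
    exact central_mul_mem (z ^ p ^ n)
      (fun t => ((show Commute z t from (hz' t).symm).pow_left (p ^ n)).eq) hx
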